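/- Let f : ℝ^M → ℝ^M be differentiable, let K ≥ 1, let h₀,…,h_{K−1} > 0, and for θ ∈ ℝ^M define x̃₀(θ) = θ and x̃_{k+1}(θ) = x̃_k(θ) + h_k f(x̃_k(θ)). Let ℓ₁,…,ℓ_K : ℝ^M → ℝ be differentiable and set R̃(θ) = ∑_{k=1}^K ℓ_k(x̃_k(θ)). Fix θ ∈ ℝ^M and define backwards: λ̃_K = ∇ℓ_K(x̃_K(θ)); for k = K−1,…,1, λ̃_k = λ̃_{k+1} + h_k (Df(x̃_k(θ)))^⊤ λ̃_{k+1} + ∇ℓ_k(x̃_k(θ)); and λ̃₀ = λ̃₁ + h₀ (Df(x̃₀(θ)))^⊤ λ̃₁. Then λ̃₀ = ∇R̃(θ). -/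

import Mathlib

open ContinuousLinearMap

/-- Backward product of operators: `backProdOp T d j = T j ∘ T (j+1) ∘ ⋯ ∘ T (j+d-1)`. -/
noncomputable def backProdOp {M : ℕ}
    (T : ℕ → EuclideanSpace ℝ (Fin M) →L[ℝ] EuclideanSpace ℝ (Fin M)) :
    ℕ → ℕ → (EuclideanSpace ℝ (Fin M) →L[ℝ] EuclideanSpace ℝ (Fin M))
  | 0, _ => 1
  | d + 1, j => T j ∘L backProdOp T d (j + 1)

lemma backProdOp_succ_right {M : ℕ}
    (T : ℕ → EuclideanSpace ℝ (Fin M) →L[ℝ] EuclideanSpace ℝ (Fin M)) (d j : ℕ) :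
    backProdOp T (d + 1) j = backProdOp T d j ∘L T (j + d) := by
  induction d generalizing j with
  | zero => simp [backProdOp, ContinuousLinearMap.one_def]
  | succ d ih =>
    show T j ∘L backProdOp T (d + 1) (j + 1) = (T j ∘L backProdOp T d (j + 1)) ∘L T (j + (d + 1))
    rw [ih (j + 1), ContinuousLinearMap.comp_assoc]
    ring_nf

/-- Explicit Euler iterates `x̃₀(θ) = θ`, `x̃_{k+1}(θ) = x̃_k(θ) + h_k f(x̃_k(θ))`. -/
noncomputable def eulerIter {E : Type*} [NormedAddCommGroup E] [NormedSpace ℝ E]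
    (f : E → E) (h : ℕ → ℝ) (θ : E) : ℕ → E
  | 0 => θ
  | k + 1 => eulerIter f h θ k + h k • f (eulerIter f h θ k)

/-- Backward adjoint algorithm with per-step loss injections: for
`R̃(θ) = ∑_{k=1}^K ℓ_k(x̃_k(θ))` defined through explicit Euler iterates, the backward
recursion `λ_K = ∇ℓ_K(x̃_K)`, `λ_k = λ_{k+1} + h_k (Df(x̃_k))ᵀ λ_{k+1} + ∇ℓ_k(x̃_k)`
for `1 ≤ k < K`, and `λ₀ = λ₁ + h₀ (Df(x̃₀))ᵀ λ₁` yields `λ₀ = ∇R̃(θ)`. -/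
theorem stmt_11 (M K : ℕ) (hK : 1 ≤ K)
    (f : EuclideanSpace ℝ (Fin M) → EuclideanSpace ℝ (Fin M))
    (hf : Differentiable ℝ f)
    (h : ℕ → ℝ) (hh : ∀ k, k < K → 0 < h k)
    (ℓ : ℕ → EuclideanSpace ℝ (Fin M) → ℝ) (hℓ : ∀ k, Differentiable ℝ (ℓ k))
    (θ : EuclideanSpace ℝ (Fin M))
    (lam : ℕ → EuclideanSpace ℝ (Fin M))
    (hlamK : lam K = gradient (ℓ K) (eulerIter f h θ K))
    (hlam : ∀ k, 1 ≤ k → k < K → lam k = lam (k + 1) +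
      h k • (ContinuousLinearMap.adjoint (fderiv ℝ f (eulerIter f h θ k))) (lam (k + 1)) +
      gradient (ℓ k) (eulerIter f h θ k))
    (hlam0 : lam 0 = lam 1 +
      h 0 • (ContinuousLinearMap.adjoint (fderiv ℝ f (eulerIter f h θ 0))) (lam 1)) :
    lam 0 = gradient (fun θ' => ∑ k ∈ Finset.Icc 1 K, ℓ k (eulerIter f h θ' k)) θ := by
  classical
  set x : ℕ → EuclideanSpace ℝ (Fin M) := fun k => eulerIter f h θ k with hx
  set g : ℕ → EuclideanSpace ℝ (Fin M) := fun k => gradient (ℓ k) (x k) with hg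
  set Mop : ℕ → EuclideanSpace ℝ (Fin M) →L[ℝ] EuclideanSpace ℝ (Fin M) :=
    fun j => (1 : EuclideanSpace ℝ (Fin M) →L[ℝ] EuclideanSpace ℝ (Fin M)) +
      h j • fderiv ℝ f (x j) with hMop
  set T : ℕ → EuclideanSpace ℝ (Fin M) →L[ℝ] EuclideanSpace ℝ (Fin M) :=
    fun j => adjoint (Mop j) with hT
  set D : ℕ → ℕ → EuclideanSpace ℝ (Fin M) →L[ℝ] EuclideanSpace ℝ (Fin M) :=
    backProdOp T with hD
  -- differentiability of the iterates
  have hφ : ∀ k, Differentiable ℝ (fun θ' => eulerIter f h θ' k) := by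
    intro k
    induction k with
    | zero =>
      have : (fun θ' : EuclideanSpace ℝ (Fin M) => eulerIter f h θ' 0) = fun θ' => θ' := by
        funext θ'; rfl
      rw [this]; exact differentiable_id
    | succ k ih =>
      show Differentiable ℝ (fun θ' => eulerIter f h θ' k + h k • f (eulerIter f h θ' k))
      exact fun θ' => ((ih θ').add (((hf _).comp θ' (ih θ')).const_smul (h k)))
  set L : ℕ → EuclideanSpace ℝ (Fin M) →L[ℝ] EuclideanSpace ℝ (Fin M) :=
    fun k => fderiv ℝ (fun θ' => eulerIter f h θ' k) θ with hL
  have hL0 : L 0 = 1 := by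
    show fderiv ℝ (fun θ' => eulerIter f h θ' 0) θ = 1
    have : (fun θ' : EuclideanSpace ℝ (Fin M) => eulerIter f h θ' 0) = fun θ' => θ' := by
      funext θ'; rfl
    rw [this, fderiv_id', ContinuousLinearMap.one_def]
  have hLstep : ∀ k, HasFDerivAt (fun θ' => eulerIter f h θ' (k + 1)) (Mop k ∘L L k) θ := by
    intro k
    have h1 : HasFDerivAt (fun θ' => eulerIter f h θ' k) (L k) θ := (hφ k θ).hasFDerivAt
    have h2 : HasFDerivAt f (fderiv ℝ f (x k)) (x k) := (hf (x k)).hasFDerivAt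
    have h3 : HasFDerivAt (fun θ' => f (eulerIter f h θ' k)) (fderiv ℝ f (x k) ∘L L k) θ :=
      h2.comp θ h1
    have h4 := h1.add (h3.const_smul (h k))
    have heq : L k + h k • (fderiv ℝ f (x k) ∘L L k) = Mop k ∘L L k := by
      ext v
      simp [hMop, ContinuousLinearMap.add_comp, ContinuousLinearMap.smul_comp]
    rw [← heq]
    exact h4
  have hLsucc : ∀ k, L (k + 1) = Mop k ∘L L k := fun k => (hLstep k).fderiv
  -- adjoint of forward derivative equals backward product
  have hadjL : ∀ k, adjoint (L k) = D k 0 := by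
    intro k
    induction k with
    | zero =>
      rw [hL0]
      simp [hD, backProdOp, ContinuousLinearMap.one_def, adjoint_id]
    | succ k ih =>
      rw [hLsucc k, adjoint_comp, ih, hD]
      show backProdOp T k 0 ∘L T k = backProdOp T (k + 1) 0
      rw [backProdOp_succ_right]
      norm_num
  -- pointwise formula for T
  have hTapply : ∀ j v, T j v = v + h j • adjoint (fderiv ℝ f (x j)) v := by
    intro j v
    simp [hT, hMop, map_add, map_smulₛₗ, ContinuousLinearMap.one_def, adjoint_id]
  -- backward induction: closed form for lam j
  have key : ∀ d j, j + d = K → 1 ≤ j →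
      lam j = ∑ k ∈ Finset.Icc j K, D (k - j) j (g k) := by
    intro d
    induction d with
    | zero =>
      intro j hj h1j
      have hjK : j = K := by omega
      subst hjK
      simp only [Finset.Icc_self, Finset.sum_singleton, Nat.sub_self]
      show lam j = backProdOp T 0 j (g j)
      simp only [backProdOp, ContinuousLinearMap.one_apply]
      exact hlamK
    | succ d ih =>
      intro j hj h1j
      have hjK : j < K := by omega
      have e1 : lam j = T j (lam (j + 1)) + g j := by
        rw [hlam j h1j hjK, hTapply]
      have hj1 : lam (j + 1) = ∑ k ∈ Finset.Icc (j + 1) K, D (k - (j + 1)) (j + 1) (g k) :=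
        ih (j + 1) (by omega) (by omega)
      rw [e1, hj1, map_sum]
      rw [Finset.Icc_eq_cons_Ioc (le_of_lt hjK), Finset.sum_cons, ← Finset.Icc_add_one_left_eq_Ioc]
      have hDjj : D (j - j) j (g j) = g j := by
        simp [hD, backProdOp]
      rw [hDjj, add_comm]
      congr 1
      refine Finset.sum_congr rfl ?_
      intro k hk
      have hk1 : j + 1 ≤ k := (Finset.mem_Icc.mp hk).1
      have hkj : k - j = (k - (j + 1)) + 1 := by omega
      rw [hkj]
      show T j (D (k - (j + 1)) (j + 1) (g k)) =
        (T j ∘L backProdOp T (k - (j + 1)) (j + 1)) (g k)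
      simp [hD]
  -- gradient of each composite term
  have hgk : ∀ k, HasGradientAt (fun θ' => ℓ k (eulerIter f h θ' k))
      (adjoint (L k) (g k)) θ := by
    intro k
    rw [hasGradientAt_iff_hasFDerivAt]
    have hgr : HasFDerivAt (ℓ k)
        (InnerProductSpace.toDual ℝ (EuclideanSpace ℝ (Fin M)) (g k)) (x k) :=
      ((hℓ k (x k)).hasGradientAt).hasFDerivAt
    have hc : HasFDerivAt (fun θ' => ℓ k (eulerIter f h θ' k))
        ((InnerProductSpace.toDual ℝ (EuclideanSpace ℝ (Fin M)) (g k)) ∘L L k) θ :=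
      hgr.comp θ (hφ k θ).hasFDerivAt
    have heq : InnerProductSpace.toDual ℝ (EuclideanSpace ℝ (Fin M)) (adjoint (L k) (g k)) =
        (InnerProductSpace.toDual ℝ (EuclideanSpace ℝ (Fin M)) (g k)) ∘L L k := by
      ext v
      simp [InnerProductSpace.toDual_apply_apply, ContinuousLinearMap.adjoint_inner_left]
    rw [heq]
    exact hc
  -- gradient of the sum
  have hsum : HasGradientAt (fun θ' => ∑ k ∈ Finset.Icc 1 K, ℓ k (eulerIter f h θ' k))
      (∑ k ∈ Finset.Icc 1 K, adjoint (L k) (g k)) θ := by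
    rw [hasGradientAt_iff_hasFDerivAt, map_sum]
    exact HasFDerivAt.fun_sum fun k _ => (hasGradientAt_iff_hasFDerivAt.mp (hgk k))
  rw [hsum.gradient]
  -- conclude
  have e0 : lam 0 = T 0 (lam 1) := by rw [hlam0, hTapply]
  have h1 := key (K - 1) 1 (by omega) le_rfl
  rw [e0, h1, map_sum]
  refine Finset.sum_congr rfl ?_
  intro k hk
  have hk1 : 1 ≤ k := (Finset.mem_Icc.mp hk).1
  rw [hadjL k]
  have hkd : k = (k - 1) + 1 := by omega
  rw [hkd]
  show T 0 (backProdOp T (k - 1 + 1 - 1) 1 (g (k - 1 + 1))) =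
    backProdOp T (k - 1 + 1) 0 (g (k - 1 + 1))
  show T 0 (backProdOp T (k - 1 + 1 - 1) 1 (g (k - 1 + 1))) =
    (T 0 ∘L backProdOp T (k - 1) (0 + 1)) (g (k - 1 + 1))
  simp
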